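/- arXiv:0905.1961 — 3 statements merged into one kernel-verified Lean document; each statement's English description precedes it below -/
import Mathlib

section
/- Let d ≥ 1 and let L be a finite abstract simplicial complex of dimension 2d satisfying f_L(-1/2) = 0, and write h_L(t) = (1+t) · h̃_L(t). Then h̃_L(-1) = 2^{2d-1} · Σ_{v ∈ V(L)} f_{Lk_L(v)}(-1/2), where the sum runs over all vertices v of L. -/
open Polynomial

/-- A finite abstract simplicial complex on the vertex type `V`: a nonempty
finite collection of finite subsets of `V` closed under taking subsets. -/
def IsSimplicialComplex {V : Type*} [DecidableEq V] (L : Finset (Finset V)) : Prop :=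
  L.Nonempty ∧ ∀ σ ∈ L, ∀ τ ⊆ σ, τ ∈ L

/-- The f-polynomial `f_L(t) = Σ_{σ ∈ L} t^{|σ|}`. -/
noncomputable def fPoly {V : Type*} [DecidableEq V] (L : Finset (Finset V)) : ℝ[X] :=
  ∑ σ ∈ L, X ^ σ.card

/-- The h-polynomial (with parameter `n`, for a complex of dimension `n - 1`):
`h_L(t) = Σ_{σ ∈ L} t^{|σ|} (1 - t)^{n - |σ|}`. -/
noncomputable def hPoly {V : Type*} [DecidableEq V] (n : ℕ) (L : Finset (Finset V)) : ℝ[X] :=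
  ∑ σ ∈ L, X ^ σ.card * (1 - X) ^ (n - σ.card)

/-- The link of a vertex `v`: `Lk_L(v) = { σ ∈ L : v ∉ σ and σ ∪ {v} ∈ L }`. -/
def link {V : Type*} [DecidableEq V] (L : Finset (Finset V)) (v : V) : Finset (Finset V) :=
  L.filter (fun σ => v ∉ σ ∧ insert v σ ∈ L)

/-- The set of vertices of `L`: all `v` with `{v} ∈ L`. -/
def verts {V : Type*} [DecidableEq V] (L : Finset (Finset V)) : Finset V :=
  (L.sup id).filter (fun v => ({v} : Finset V) ∈ L)


private lemma eval_deriv_term_aux (n k : ℕ) :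
    (derivative (X ^ k * (1 - X) ^ (n - k) : ℝ[X])).eval (-1)
      = k * (-1:ℝ)^(k-1) * 2^(n-k) - ((n - k : ℕ):ℝ) * (-1)^k * 2^(n-k-1) := by
  rw [derivative_mul, derivative_X_pow, derivative_pow]
  simp only [eval_add, eval_mul, eval_pow, eval_sub, eval_one, eval_X, eval_natCast,
    derivative_sub, derivative_one, derivative_X, zero_sub, eval_neg]
  norm_num
  ring

private lemma key_scalar_aux (d k : ℕ) (hd : 1 ≤ d) (hk : k ≤ 2*d+1) :
    (k:ℝ) * (-1)^(k-1) * 2^(2*d+1-k) - ((2*d+1-k : ℕ):ℝ) * (-1)^k * 2^(2*d+1-k-1)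
      = 2^(2*d-1) * k * (-1/2)^(k-1) + (-(2*d+1 : ℝ) * 2^(2*d)) * (-1/2)^k := by
  rcases Nat.eq_zero_or_pos k with hk0 | hk1
  · subst hk0
    simp
    ring
  rcases eq_or_lt_of_le hk with hkn | hkn
  · -- k = 2d+1
    subst hkn
    have h1 : ((-1:ℝ)/2)^(2*d) = ((4:ℝ)^d)⁻¹ := by
      rw [pow_mul]; norm_num; rw [one_div, inv_pow]
    have h2 : (2:ℝ)^(2*d) = 4^d := by rw [pow_mul]; norm_num
    have h3 : (2:ℝ)^(2*d-1) = 4^d / 2 := by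
      rw [eq_div_iff (by norm_num), ← pow_succ, show 2*d-1+1 = 2*d by omega]; exact h2
    have h4 : ((-1:ℝ))^(2*d) = 1 := by rw [pow_mul]; norm_num
    have h5 : ((-1:ℝ)/2)^(2*d+1) = ((4:ℝ)^d)⁻¹ * (-1/2) := by rw [pow_succ, h1]
    have h4d : (4:ℝ)^d ≠ 0 := by positivity
    simp only [Nat.add_sub_cancel, Nat.sub_self, pow_zero, h1, h2, h3, h4, h5]
    push_cast
    field_simp
    ring
  · -- 1 ≤ k ≤ 2d
    have hk2 : k ≤ 2*d := by omega
    have e1 : (2:ℝ)^(2*d+1-k) = 2^(2*d+1) / 2^k := by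
      rw [eq_div_iff (by positivity), ← pow_add]; congr 1; omega
    have e2 : (2:ℝ)^(2*d+1-k-1) = 2^(2*d+1) / (2^k * 2) := by
      rw [eq_div_iff (by positivity), ← pow_succ, ← pow_add]; congr 1; omega
    have e3 : (2:ℝ)^(2*d-1) = 2^(2*d+1)/4 := by
      rw [eq_div_iff (by norm_num), show (4:ℝ) = 2^2 by norm_num, ← pow_add]; congr 1; omega
    have e4 : (2:ℝ)^(2*d) = 2^(2*d+1)/2 := by
      rw [eq_div_iff (by norm_num), ← pow_succ]
    have e5 : ((-1:ℝ))^(k-1) = -(-1)^k := by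
      have : ((-1:ℝ))^(k-1) * (-1)^1 = (-1)^k := by rw [← pow_add]; congr 1; omega
      simp at this; linarith
    have e6 : ((-1:ℝ)/2)^(k-1) = (-1/2)^k * (-2) := by
      have : ((-1:ℝ)/2)^(k-1) * (-1/2)^1 = (-1/2)^k := by rw [← pow_add]; congr 1; omega
      norm_num at this; linarith
    have e7 : ((-1:ℝ)/2)^k = (-1)^k / 2^k := by rw [div_pow]
    have ec : ((2*d+1-k:ℕ):ℝ) = 2*d+1 - k := by push_cast [hk]; ring
    rw [e1, e2, e3, e4, e5, e6, e7, ec]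
    have h2k : (2:ℝ)^k ≠ 0 := by positivity
    field_simp
    ring

private lemma sum_links_aux {V : Type*} [DecidableEq V] (L : Finset (Finset V))
    (hL : IsSimplicialComplex L) :
    ∑ v ∈ verts L, ∑ σ ∈ link L v, (-1/2:ℝ)^σ.card
      = ∑ τ ∈ L, (τ.card:ℝ) * (-1/2)^(τ.card - 1) := by
  have hR : ∀ τ ∈ L, (τ.card:ℝ) * (-1/2:ℝ)^(τ.card-1) = ∑ v ∈ τ, (-1/2:ℝ)^((τ.erase v).card) := by
    intro τ hτ
    rw [Finset.sum_congr rfl (fun v hv => by rw [Finset.card_erase_of_mem hv]),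
      Finset.sum_const, nsmul_eq_mul]
  rw [Finset.sum_congr rfl hR, Finset.sum_sigma', Finset.sum_sigma']
  refine Finset.sum_nbij' (i := fun x => (⟨insert x.1 x.2, x.1⟩ : Σ _ : Finset V, V))
    (j := fun y => (⟨y.2, y.1.erase y.2⟩ : Σ _ : V, Finset V)) ?_ ?_ ?_ ?_ ?_
  · rintro ⟨v, σ⟩ hx
    rw [Finset.mem_sigma] at hx ⊢
    obtain ⟨hv, hσ⟩ := hx
    rw [link, Finset.mem_filter] at hσ
    exact ⟨hσ.2.2, Finset.mem_insert_self _ _⟩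
  · rintro ⟨τ, v⟩ hy
    rw [Finset.mem_sigma] at hy ⊢
    obtain ⟨hτ, hv⟩ := hy
    constructor
    · rw [verts, Finset.mem_filter]
      refine ⟨Finset.le_sup (f := id) hτ hv, hL.2 τ hτ _ (Finset.singleton_subset_iff.mpr hv)⟩
    · rw [link, Finset.mem_filter]
      exact ⟨hL.2 τ hτ _ (Finset.erase_subset _ _), Finset.notMem_erase _ _,
        by rw [Finset.insert_erase hv]; exact hτ⟩
  · rintro ⟨v, σ⟩ hx
    rw [Finset.mem_sigma] at hx
    obtain ⟨hv, hσ⟩ := hx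
    rw [link, Finset.mem_filter] at hσ
    simp [Finset.erase_insert hσ.2.1]
  · rintro ⟨τ, v⟩ hy
    rw [Finset.mem_sigma] at hy
    simp [Finset.insert_erase hy.2]
  · rintro ⟨v, σ⟩ hx
    rw [Finset.mem_sigma] at hx
    obtain ⟨hv, hσ⟩ := hx
    rw [link, Finset.mem_filter] at hσ
    simp [Finset.erase_insert hσ.2.1]

/-- Let `d ≥ 1` and let `L` be a finite simplicial complex of dimension `2d`
with `f_L(-1/2) = 0`, and write `h_L(t) = (1 + t) · h̃_L(t)`. Then
`h̃_L(-1) = 2^{2d-1} · Σ_{v ∈ V(L)} f_{Lk_L(v)}(-1/2)`, the sum running over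
all vertices of `L`. -/
theorem htilde_eval_neg_one_eq_sum_links {V : Type*} [DecidableEq V] (d : ℕ) (hd : 1 ≤ d)
    (L : Finset (Finset V)) (hL : IsSimplicialComplex L)
    (hdim : (∀ σ ∈ L, σ.card ≤ 2 * d + 1) ∧ ∃ σ ∈ L, σ.card = 2 * d + 1)
    (hf : (fPoly L).eval (-1/2) = 0)
    (htilde : ℝ[X]) (hfac : hPoly (2 * d + 1) L = (1 + X) * htilde) :
    htilde.eval (-1) = 2 ^ (2 * d - 1) * ∑ v ∈ verts L, (fPoly (link L v)).eval (-1/2) := by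
  -- Step 1: h̃(-1) equals the derivative of h at -1
  have h1 : htilde.eval (-1) = (derivative (hPoly (2*d+1) L)).eval (-1) := by
    rw [hfac, derivative_mul]
    simp
  -- Step 2: compute the derivative evaluation termwise
  have h2 : (derivative (hPoly (2*d+1) L)).eval (-1)
      = ∑ σ ∈ L, ((σ.card:ℝ) * (-1)^(σ.card-1) * 2^(2*d+1-σ.card)
          - ((2*d+1-σ.card : ℕ):ℝ) * (-1)^(σ.card) * 2^(2*d+1-σ.card-1)) := by
    rw [hPoly, derivative_sum, eval_finset_sum]
    exact Finset.sum_congr rfl fun σ _ => eval_deriv_term_aux (2*d+1) σ.card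
  -- hf as a sum
  have hf' : ∑ σ ∈ L, (-1/2:ℝ)^σ.card = 0 := by
    rw [← hf, fPoly, eval_finset_sum]
    simp
  -- Step 3: rewrite using the key scalar identity
  have h3 : (∑ σ ∈ L, ((σ.card:ℝ) * (-1)^(σ.card-1) * 2^(2*d+1-σ.card)
          - ((2*d+1-σ.card : ℕ):ℝ) * (-1)^(σ.card) * 2^(2*d+1-σ.card-1)))
      = 2^(2*d-1) * ∑ τ ∈ L, (τ.card:ℝ) * (-1/2)^(τ.card - 1) := by
    rw [Finset.sum_congr rfl fun σ hσ => key_scalar_aux d σ.card hd (hdim.1 σ hσ),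
      Finset.sum_add_distrib, ← Finset.mul_sum, hf', mul_zero, add_zero]
    simp_rw [mul_assoc]
    rw [← Finset.mul_sum]
  -- Step 4: the sum over links
  have h4 : ∑ v ∈ verts L, (fPoly (link L v)).eval (-1/2)
      = ∑ τ ∈ L, (τ.card:ℝ) * (-1/2)^(τ.card - 1) := by
    rw [← sum_links_aux L hL]
    exact Finset.sum_congr rfl fun v _ => by rw [fPoly, eval_finset_sum]; simp
  rw [h1, h2, h3, h4]
end

section
/- (Hard direction of the main theorem, in the combinatorial form actually proved.) Let d ≥ 1 and let L be a finite abstract simplicial complex of dimension 2d satisfying f_L(-1/2) = 0, and write h_L(t) = (1+t) · h̃_L(t). Assume that for every vertex v of L the Charney–Davis quantity of its link is nonnegative: (-1)^d · f_{Lk_L(v)}(-1/2) ≥ 0. Then (-1)^d · h̃_L(-1) ≥ 0. -/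
open Polynomial

theorem term_eval (n a : ℕ) (ha : a ≤ n) (hn : 2 ≤ n) :
    (derivative ((X:ℝ[X])^a * (1-X)^(n-a))).eval (-1)
      = -2^(n-1) * (n:ℝ) * (-1/2)^a + 2^(n-2) * (a:ℝ) * (-1/2)^(a-1) := by
  simp only [derivative_mul, derivative_pow, derivative_X, derivative_sub, derivative_one,
    eval_add, eval_mul, eval_pow, eval_sub, eval_one, eval_X, eval_natCast, mul_one,
    eval_neg, zero_sub, eval_zero, eval_C, map_natCast]
  rcases Nat.exists_eq_add_of_le ha with ⟨k, rfl⟩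
  cases a with
  | zero => norm_num [mul_comm]
  | succ b =>
    cases k with
    | zero =>
      rcases Nat.exists_eq_add_of_le (show 1 ≤ b by omega) with ⟨c, rfl⟩
      rw [show 1 + c + 1 + 0 - (1 + c + 1) = 0 by omega,
          show 1 + c + 1 + 0 - 1 = c + 1 by omega,
          show 1 + c + 1 + 0 - 2 = c by omega]
      push_cast
      rw [div_pow, div_pow]
      field_simp
      ring
    | succ k' =>
      rw [show b + 1 + (k' + 1) - (b + 1) = k' + 1 by omega,
          show k' + 1 - 1 = k' by omega,
          show b + 1 + (k' + 1) - 1 = b + k' + 1 by omega,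
          show b + 1 + (k' + 1) - 2 = b + k' by omega,
          show b + 1 - 1 = b by omega]
      push_cast
      rw [div_pow, div_pow]
      field_simp
      ring


/-- Hard direction of the main theorem of the paper, in its combinatorial form:
let `d ≥ 1` and let `L` be a finite simplicial complex of dimension `2d` with
`f_L(-1/2) = 0`, and write `h_L(t) = (1 + t) · h̃_L(t)`. If every vertex `v` of
`L` satisfies the Charney–Davis inequality for its link,
`(-1)^d · f_{Lk_L(v)}(-1/2) ≥ 0`, then `(-1)^d · h̃_L(-1) ≥ 0`. -/
theorem charney_davis_even {V : Type*} [DecidableEq V] (d : ℕ) (hd : 1 ≤ d)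
    (L : Finset (Finset V)) (hL : IsSimplicialComplex L)
    (hdim : (∀ σ ∈ L, σ.card ≤ 2 * d + 1) ∧ ∃ σ ∈ L, σ.card = 2 * d + 1)
    (hf : (fPoly L).eval (-1/2) = 0)
    (htilde : ℝ[X]) (hfac : hPoly (2 * d + 1) L = (1 + X) * htilde)
    (hCD : ∀ v : V, ({v} : Finset V) ∈ L →
      0 ≤ (-1 : ℝ) ^ d * (fPoly (link L v)).eval (-1/2)) :
    0 ≤ (-1 : ℝ) ^ d * htilde.eval (-1) := by
  obtain ⟨hLne, hclosed⟩ := hL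
  set n : ℕ := 2 * d + 1 with hn
  have hn2 : 2 ≤ n := by omega
  -- Step 1
  have h1 : htilde.eval (-1) = (derivative (hPoly n L)).eval (-1) := by
    rw [hfac]
    simp [derivative_mul]
  -- Step 2
  have h2 : (derivative (hPoly n L)).eval (-1)
      = -2^(n-1) * (n:ℝ) * (∑ σ ∈ L, (-1/2:ℝ)^σ.card)
        + 2^(n-2) * ∑ σ ∈ L, (σ.card:ℝ) * (-1/2:ℝ)^(σ.card-1) := by
    unfold hPoly
    rw [derivative_sum, eval_finset_sum]
    rw [Finset.sum_congr rfl (fun σ hσ => term_eval n σ.card (hdim.1 σ hσ) hn2)]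
    rw [Finset.sum_add_distrib, Finset.mul_sum, Finset.mul_sum]
    congr 1 <;> apply Finset.sum_congr rfl <;> intros <;> ring
  -- Step 3: f_L(-1/2) = 0
  have h3 : (∑ σ ∈ L, (-1/2:ℝ)^σ.card) = 0 := by
    have := hf
    unfold fPoly at this
    rw [eval_finset_sum] at this
    simpa using this
  -- Step 4: double counting
  have h4 : ∑ σ ∈ L, (σ.card:ℝ) * (-1/2:ℝ)^(σ.card-1)
      = ∑ v ∈ L.biUnion id, (fPoly (link L v)).eval (-1/2) := by
    have lhs : ∀ σ ∈ L, (σ.card:ℝ) * (-1/2:ℝ)^(σ.card-1)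
        = ∑ _v ∈ σ, (-1/2:ℝ)^(σ.card-1) := by
      intro σ _
      rw [Finset.sum_const, nsmul_eq_mul]
    rw [Finset.sum_congr rfl lhs]
    have rhs : ∀ v ∈ L.biUnion id, (fPoly (link L v)).eval (-1/2)
        = ∑ τ ∈ link L v, (-1/2:ℝ)^τ.card := by
      intro v _
      unfold fPoly
      rw [eval_finset_sum]
      simp
    rw [Finset.sum_congr rfl rhs]
    rw [Finset.sum_sigma' L (fun σ => σ) (fun σ _v => (-1/2:ℝ)^(σ.card-1)),
        Finset.sum_sigma' (L.biUnion id) (fun v => link L v) (fun _v τ => (-1/2:ℝ)^τ.card)]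
    refine Finset.sum_nbij' (fun p => ⟨p.2, p.1.erase p.2⟩) (fun q => ⟨insert q.1 q.2, q.1⟩)
      ?_ ?_ ?_ ?_ ?_
    · rintro ⟨σ, v⟩ hp
      rw [Finset.mem_sigma] at hp ⊢
      obtain ⟨hσ, hv⟩ := hp
      refine ⟨Finset.mem_biUnion.2 ⟨σ, hσ, hv⟩, ?_⟩
      simp only [link, Finset.mem_filter]
      exact ⟨hclosed σ hσ _ (Finset.erase_subset _ _),
        Finset.notMem_erase _ _, by rw [Finset.insert_erase hv]; exact hσ⟩
    · rintro ⟨v, τ⟩ hq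
      rw [Finset.mem_sigma] at hq ⊢
      obtain ⟨-, hτ⟩ := hq
      simp only [link, Finset.mem_filter] at hτ
      exact ⟨hτ.2.2, Finset.mem_insert_self _ _⟩
    · rintro ⟨σ, v⟩ hp
      rw [Finset.mem_sigma] at hp
      simp [Finset.insert_erase hp.2]
    · rintro ⟨v, τ⟩ hq
      rw [Finset.mem_sigma] at hq
      obtain ⟨-, hτ⟩ := hq
      simp only [link, Finset.mem_filter] at hτ
      simp [Finset.erase_insert hτ.2.1]
    · rintro ⟨σ, v⟩ hp
      rw [Finset.mem_sigma] at hp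
      simp [Finset.card_erase_of_mem hp.2]
  -- assemble
  have key : htilde.eval (-1) = 2^(n-2) * ∑ v ∈ L.biUnion id, (fPoly (link L v)).eval (-1/2) := by
    rw [h1, h2, h3, h4]; ring
  rw [key]
  have : (-1:ℝ)^d * (2^(n-2) * ∑ v ∈ L.biUnion id, (fPoly (link L v)).eval (-1/2))
      = 2^(n-2) * ∑ v ∈ L.biUnion id, (-1:ℝ)^d * (fPoly (link L v)).eval (-1/2) := by
    simp only [Finset.mul_sum]
    apply Finset.sum_congr rfl; intros; ring
  rw [this]
  apply mul_nonneg (by positivity)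
  apply Finset.sum_nonneg
  intro v hv
  apply hCD
  obtain ⟨σ, hσ, hvσ⟩ := Finset.mem_biUnion.1 hv
  exact hclosed σ hσ _ (Finset.singleton_subset_iff.2 hvσ)
end

section
/- Let d ≥ 1 and let L be a finite abstract simplicial complex of dimension 2d with f_L(-1/2) = 0 and h_L(t) = (1+t) · h̃_L(t), and assume moreover that the link of every vertex of L has dimension exactly 2d-1. Then 2 · h̃_L(-1) = Σ_{v ∈ V(L)} h_{Lk_L(v)}(-1), where for each vertex v the h-polynomial of the link is computed with parameter n = 2d. In particular (-1)^d h̃_L(-1) = (1/2) Σ_{v} (-1)^d h_{Lk_L(v)}(-1). -/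
open Polynomial

/-- Evaluation at `-1` of the derivative of a single `h`-polynomial term. -/
lemma evalDerivTerm (a b : ℕ) :
    ((derivative (X^a * (1-X)^b : ℝ[X]))).eval (-1)
      = a * (-1)^(a-1) * 2^b - b * (-1)^a * 2^(b-1) := by
  simp [derivative_mul, derivative_X_pow, derivative_pow]
  ring

/-- The key scalar identity behind the per-face computation. -/
lemma keyScalar (a b : ℕ) :
    2 * ((a:ℝ) * (-1)^(a-1) * 2^b - b * (-1)^a * 2^(b-1)) + (a+b) * ((-1)^a * 2^b)
      = a * (-1)^(a-1) * 2^b := by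
  rcases a with _ | a <;> rcases b with _ | b <;> simp [pow_succ] <;> ring

lemma keyScalar' (a n : ℕ) (h : a ≤ n) :
    2 * ((a:ℝ) * (-1)^(a-1) * 2^(n-a) - ((n-a : ℕ) : ℝ) * (-1)^a * 2^(n-a-1))
      + n * ((-1)^a * 2^(n-a)) = a * (-1)^(a-1) * 2^(n-a) := by
  obtain ⟨b, rfl⟩ := Nat.exists_eq_add_of_le h
  have h1 : a + b - a = b := by omega
  rw [h1]
  push_cast
  linear_combination keyScalar a b

lemma fTerm (a n : ℕ) (h : a ≤ n) : (-1:ℝ)^a * 2^(n-a) = 2^n * (-1/2:ℝ)^a := by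
  obtain ⟨b, rfl⟩ := Nat.exists_eq_add_of_le h
  simp [pow_add, div_pow, neg_div]
  field_simp
  ring_nf
  rw [← mul_pow]
  norm_num

lemma hPoly_eval_neg_one {V : Type*} [DecidableEq V] (n : ℕ) (L : Finset (Finset V)) :
    (hPoly n L).eval (-1 : ℝ) = ∑ σ ∈ L, (-1:ℝ)^σ.card * 2^(n - σ.card) := by
  simp [hPoly, eval_finset_sum]
  norm_num

/-- Double counting of pairs `(v, σ)` with `σ ∈ Lk_L(v)`. -/
lemma doubleCount {V : Type*} [DecidableEq V] (L : Finset (Finset V))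
    (hcl : ∀ σ ∈ L, ∀ τ ⊆ σ, τ ∈ L) (n : ℕ) :
    ∑ v ∈ verts L, ∑ σ ∈ link L v, (-1:ℝ)^σ.card * 2^(n - 1 - σ.card)
      = ∑ τ ∈ L, (τ.card : ℝ) * ((-1)^(τ.card - 1) * 2^(n - τ.card)) := by
  rw [Finset.sum_sigma' (verts L) (fun v => link L v)]
  have : ∀ τ ∈ L, (τ.card : ℝ) * ((-1)^(τ.card - 1) * 2^(n - τ.card))
      = ∑ v ∈ τ, ((-1:ℝ)^(τ.card - 1) * 2^(n - τ.card)) := by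
    intro τ _; rw [Finset.sum_const, nsmul_eq_mul]
  rw [Finset.sum_congr rfl this, Finset.sum_sigma' L (fun τ => τ)]
  refine Finset.sum_nbij' (fun p => ⟨insert p.1 p.2, p.1⟩) (fun p => ⟨p.2, p.1.erase p.2⟩)
    ?_ ?_ ?_ ?_ ?_
  · rintro ⟨v, σ⟩ hp
    simp only [Finset.mem_sigma, verts, link, Finset.mem_filter] at hp ⊢
    exact ⟨hp.2.2.2, Finset.mem_insert_self _ _⟩
  · rintro ⟨τ, v⟩ hp
    simp only [Finset.mem_sigma, verts, link, Finset.mem_filter] at hp ⊢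
    obtain ⟨hτ, hv⟩ := hp
    refine ⟨⟨Finset.mem_sup.2 ⟨τ, hτ, hv⟩, hcl τ hτ _ (Finset.singleton_subset_iff.2 hv)⟩,
      hcl τ hτ _ (Finset.erase_subset _ _), Finset.notMem_erase _ _, ?_⟩
    rwa [Finset.insert_erase hv]
  · rintro ⟨v, σ⟩ hp
    simp only [Finset.mem_sigma, verts, link, Finset.mem_filter] at hp
    simp [Finset.erase_insert hp.2.2.1]
  · rintro ⟨τ, v⟩ hp
    simp only [Finset.mem_sigma] at hp
    simp [Finset.insert_erase hp.2]
  · rintro ⟨v, σ⟩ hp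
    simp only [Finset.mem_sigma, verts, link, Finset.mem_filter] at hp
    rw [Finset.card_insert_of_notMem hp.2.2.1]
    rw [Nat.succ_sub_one, show n - 1 - σ.card = n - (σ.card + 1) by omega]

/-- Let `d ≥ 1` and let `L` be a finite simplicial complex of dimension `2d`
with `f_L(-1/2) = 0`, `h_L(t) = (1 + t) · h̃_L(t)`, and assume the link of every
vertex of `L` has dimension exactly `2d - 1`. Then
`2 · h̃_L(-1) = Σ_{v ∈ V(L)} h_{Lk_L(v)}(-1)` (each link's h-polynomial computed
with parameter `n = 2d`); in particular
`(-1)^d h̃_L(-1) = (1/2) Σ_v (-1)^d h_{Lk_L(v)}(-1)`. -/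
theorem two_htilde_eq_sum_links {V : Type*} [DecidableEq V] (d : ℕ) (hd : 1 ≤ d)
    (L : Finset (Finset V)) (hL : IsSimplicialComplex L)
    (hdim : (∀ σ ∈ L, σ.card ≤ 2 * d + 1) ∧ ∃ σ ∈ L, σ.card = 2 * d + 1)
    (hf : (fPoly L).eval (-1/2) = 0)
    (htilde : ℝ[X]) (hfac : hPoly (2 * d + 1) L = (1 + X) * htilde)
    (hlinkdim : ∀ v ∈ verts L,
      (∀ σ ∈ link L v, σ.card ≤ 2 * d) ∧ ∃ σ ∈ link L v, σ.card = 2 * d) :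
    2 * htilde.eval (-1) = ∑ v ∈ verts L, (hPoly (2 * d) (link L v)).eval (-1) ∧
      (-1 : ℝ) ^ d * htilde.eval (-1) =
        (1 / 2) * ∑ v ∈ verts L, (-1 : ℝ) ^ d * (hPoly (2 * d) (link L v)).eval (-1) := by
  set n := 2 * d + 1 with hn
  -- h_L(-1) = 0
  have hH : ∑ σ ∈ L, (-1:ℝ)^σ.card * 2^(n - σ.card) = 0 := by
    have : ∑ σ ∈ L, (-1:ℝ)^σ.card * 2^(n - σ.card)
        = 2^n * ∑ σ ∈ L, (-1/2:ℝ)^σ.card := by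
      rw [Finset.mul_sum]
      exact Finset.sum_congr rfl fun σ hσ => fTerm _ _ (hdim.1 σ hσ)
    rw [this]
    have hf' : ∑ σ ∈ L, (-1/2:ℝ)^σ.card = 0 := by
      have := hf
      simpa [fPoly, eval_finset_sum] using this
    rw [hf', mul_zero]
  -- h̃(-1) = h'(-1)
  have hderiv : (derivative (hPoly n L)).eval (-1 : ℝ) = htilde.eval (-1) := by
    rw [hfac, derivative_mul]
    simp
  -- h'(-1) as an explicit sum
  have hDsum : (derivative (hPoly n L)).eval (-1 : ℝ)
      = ∑ σ ∈ L, ((σ.card : ℝ) * (-1)^(σ.card-1) * 2^(n-σ.card)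
          - ((n-σ.card : ℕ) : ℝ) * (-1)^σ.card * 2^(n-σ.card-1)) := by
    rw [hPoly, derivative_sum, eval_finset_sum]
    exact Finset.sum_congr rfl fun σ _ => evalDerivTerm _ _
  -- 2 h̃(-1) = ∑_σ |σ| (-1)^{|σ|-1} 2^{n-|σ|}
  have hmain : 2 * htilde.eval (-1)
      = ∑ σ ∈ L, (σ.card : ℝ) * ((-1)^(σ.card-1) * 2^(n-σ.card)) := by
    calc 2 * htilde.eval (-1)
        = 2 * (derivative (hPoly n L)).eval (-1)
            + (n : ℝ) * ∑ σ ∈ L, (-1:ℝ)^σ.card * 2^(n - σ.card) := by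
          rw [hH, hderiv]; ring
      _ = ∑ σ ∈ L, (2 * ((σ.card : ℝ) * (-1)^(σ.card-1) * 2^(n-σ.card)
            - ((n-σ.card : ℕ) : ℝ) * (-1)^σ.card * 2^(n-σ.card-1))
            + (n : ℝ) * ((-1)^σ.card * 2^(n-σ.card))) := by
          rw [hDsum, Finset.mul_sum, Finset.mul_sum, ← Finset.sum_add_distrib]
      _ = ∑ σ ∈ L, (σ.card : ℝ) * ((-1)^(σ.card-1) * 2^(n-σ.card)) := by
          refine Finset.sum_congr rfl fun σ hσ => ?_
          linear_combination keyScalar' σ.card n (hdim.1 σ hσ)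
  -- link sum
  have hRHS : ∑ v ∈ verts L, (hPoly (2 * d) (link L v)).eval (-1 : ℝ)
      = ∑ σ ∈ L, (σ.card : ℝ) * ((-1)^(σ.card-1) * 2^(n-σ.card)) := by
    have h2d : 2 * d = n - 1 := by omega
    calc ∑ v ∈ verts L, (hPoly (2 * d) (link L v)).eval (-1 : ℝ)
        = ∑ v ∈ verts L, ∑ σ ∈ link L v, (-1:ℝ)^σ.card * 2^(n - 1 - σ.card) := by
          refine Finset.sum_congr rfl fun v _ => ?_
          rw [hPoly_eval_neg_one, h2d]
      _ = ∑ σ ∈ L, (σ.card : ℝ) * ((-1)^(σ.card-1) * 2^(n-σ.card)) :=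
          doubleCount L hL.2 n
  have h1 : 2 * htilde.eval (-1) = ∑ v ∈ verts L, (hPoly (2 * d) (link L v)).eval (-1) := by
    rw [hmain, hRHS]
  refine ⟨h1, ?_⟩
  rw [← Finset.mul_sum]
  linear_combination ((-1:ℝ)^d / 2) * h1
end
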